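/- There is a group isomorphism between the quotient (U(1) × SU(2) × SU(3)) / ⟨(ζ₆, −1₂, ζ₃·1₃)⟩, where ⟨(ζ₆, −1₂, ζ₃·1₃)⟩ is the cyclic subgroup generated by the central element (ζ₂^{-1}·ζ₃^{-1}, ζ₂·1₂, ζ₃·1₃) = (ζ₆, −1₂, ζ₃·1₃), and the group S(U(2)×U(3)) = {(A, B) ∈ U(2)×U(3) : det A · det B = 1}. -/

import Mathlib

/-- `ζ n = exp(2πi/n)`, the standard primitive `n`-th root of unity in `ℂ`. -/
noncomputable def zeta (n : ℕ) : ℂ := Complex.exp (2 * Real.pi * Complex.I / n)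

/-- The special unitary group `SU(n)`, as the subgroup of the unitary group
`Matrix.unitaryGroup n ℂ` consisting of the matrices of determinant `1`. -/
noncomputable def SU (n : Type*) [DecidableEq n] [Fintype n] :
    Subgroup (Matrix.unitaryGroup n ℂ) :=
  MonoidHom.ker ((Units.map (Matrix.detMonoidHom : Matrix n n ℂ →* ℂ)).comp Unitary.toUnits)

/-- The cyclic subgroup of `U(1) × SU(2) × SU(3)` generated by the central element
`(ζ₂⁻¹·ζ₃⁻¹, ζ₂·1₂, ζ₃·1₃) = (ζ₆, -1₂, ζ₃·1₃)`. -/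
noncomputable def N : Subgroup (Circle × SU (Fin 2) × SU (Fin 3)) :=
  Subgroup.closure
    {x | (x.1 : ℂ) = zeta 6 ∧
      ((x.2.1 : Matrix.unitaryGroup (Fin 2) ℂ) : Matrix (Fin 2) (Fin 2) ℂ) =
        -(1 : Matrix (Fin 2) (Fin 2) ℂ) ∧
      ((x.2.2 : Matrix.unitaryGroup (Fin 3) ℂ) : Matrix (Fin 3) (Fin 3) ℂ) =
        zeta 3 • (1 : Matrix (Fin 3) (Fin 3) ℂ)}

instance : N.Normal := by
  have hle : N ≤ Subgroup.center (Circle × SU (Fin 2) × SU (Fin 3)) := by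
    rw [N, Subgroup.closure_le]
    rintro ⟨c, A, B⟩ ⟨-, hA, hB⟩
    rw [SetLike.mem_coe, Subgroup.mem_center_iff]
    rintro ⟨c', A', B'⟩
    refine Prod.ext (mul_comm _ _) (Prod.ext ?_ ?_)
    · refine Subtype.ext (Subtype.ext ?_)
      show (A' : Matrix.unitaryGroup (Fin 2) ℂ).1 * (A : Matrix.unitaryGroup (Fin 2) ℂ).1 =
        (A : Matrix.unitaryGroup (Fin 2) ℂ).1 * (A' : Matrix.unitaryGroup (Fin 2) ℂ).1
      rw [hA]
      simp
    · refine Subtype.ext (Subtype.ext ?_)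
      show (B' : Matrix.unitaryGroup (Fin 3) ℂ).1 * (B : Matrix.unitaryGroup (Fin 3) ℂ).1 =
        (B : Matrix.unitaryGroup (Fin 3) ℂ).1 * (B' : Matrix.unitaryGroup (Fin 3) ℂ).1
      rw [hB]
      simp [mul_smul_comm, smul_mul_assoc]
  constructor
  intro n hn g
  have hcomm := Subgroup.mem_center_iff.1 (hle hn) g
  rw [hcomm, mul_assoc, mul_inv_cancel, mul_one]
  exact hn

/-- `S(U(2)×U(3))`, the subgroup of `U(2) × U(3)` of pairs `(A, B)` with
`det A · det B = 1`. -/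
noncomputable def SU23 :
    Subgroup (Matrix.unitaryGroup (Fin 2) ℂ × Matrix.unitaryGroup (Fin 3) ℂ) where
  carrier := {x | ((x.1 : Matrix (Fin 2) (Fin 2) ℂ).det) *
    ((x.2 : Matrix (Fin 3) (Fin 3) ℂ).det) = 1}
  one_mem' := by simp
  mul_mem' := by
    intro a b ha hb
    simp only [Set.mem_setOf_eq] at *
    show ((a.1 : Matrix (Fin 2) (Fin 2) ℂ) * (b.1 : Matrix (Fin 2) (Fin 2) ℂ)).det *
      ((a.2 : Matrix (Fin 3) (Fin 3) ℂ) * (b.2 : Matrix (Fin 3) (Fin 3) ℂ)).det = 1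
    rw [Matrix.det_mul, Matrix.det_mul, mul_mul_mul_comm, ha, hb, mul_one]
  inv_mem' := by
    intro a ha
    simp only [Set.mem_setOf_eq] at *
    show ((star (a.1 : Matrix (Fin 2) (Fin 2) ℂ)).det) *
      ((star (a.2 : Matrix (Fin 3) (Fin 3) ℂ)).det) = 1
    rw [Matrix.star_eq_conjTranspose, Matrix.star_eq_conjTranspose, Matrix.det_conjTranspose,
      Matrix.det_conjTranspose, ← star_mul', ha, star_one]

section AuxGSM

open Complex

lemma conj_mul_self' (c : Circle) : (starRingEnd ℂ) (c : ℂ) * c = 1 := by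
  rw [← Circle.coe_inv_eq_conj, ← Circle.coe_mul, inv_mul_cancel, Circle.coe_one]

noncomputable def uscalar (n : Type*) [DecidableEq n] [Fintype n] :
    Circle →* Matrix.unitaryGroup n ℂ where
  toFun c := ⟨(c : ℂ) • (1 : Matrix n n ℂ), by
    constructor <;>
    · show _ = (1 : Matrix n n ℂ)
      rw [Matrix.star_eq_conjTranspose, Matrix.conjTranspose_smul, Matrix.conjTranspose_one]
      simp [smul_smul, conj_mul_self' c, mul_comm ((c:ℂ)) _]⟩
  map_one' := Subtype.ext (by simp)
  map_mul' a b := Subtype.ext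
    (show ((a*b : Circle):ℂ) • (1:Matrix n n ℂ) = ((a:ℂ) • 1) * ((b:ℂ) • 1) by
      rw [Circle.coe_mul, smul_mul_smul_comm, one_mul])

lemma uscalar_coe (n : Type*) [DecidableEq n] [Fintype n] (c : Circle) :
    ((uscalar n c : Matrix.unitaryGroup n ℂ) : Matrix n n ℂ) = (c : ℂ) • 1 := rfl

lemma uscalar_comm (n : Type*) [DecidableEq n] [Fintype n] (c : Circle)
    (A : Matrix.unitaryGroup n ℂ) : Commute (uscalar n c) A := by
  have h : ((c:ℂ) • (1 : Matrix n n ℂ)) * (A : Matrix n n ℂ)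
      = (A : Matrix n n ℂ) * ((c:ℂ) • (1 : Matrix n n ℂ)) := by simp
  exact Subtype.ext h

lemma uscalar_mul_coe (n : Type*) [DecidableEq n] [Fintype n] (c : Circle)
    (A : Matrix.unitaryGroup n ℂ) :
    ((uscalar n c * A : Matrix.unitaryGroup n ℂ) : Matrix n n ℂ) = (c : ℂ) • A := by
  show ((c:ℂ) • (1 : Matrix n n ℂ)) * A = (c:ℂ) • (A : Matrix n n ℂ)
  rw [Matrix.smul_mul, one_mul]

lemma mem_SU_iff {n : Type*} [DecidableEq n] [Fintype n] (g : Matrix.unitaryGroup n ℂ) :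
    g ∈ SU n ↔ ((g : Matrix n n ℂ)).det = 1 := by
  simp [SU, MonoidHom.mem_ker, Units.ext_iff]

lemma zeta_pow_self (n : ℕ) (hn : (n:ℂ) ≠ 0) : zeta n ^ n = 1 := by
  rw [zeta, ← Complex.exp_nat_mul, mul_div_cancel₀ _ hn, Complex.exp_two_pi_mul_I]

lemma zeta6_pow_three : zeta 6 ^ 3 = -1 := by
  rw [zeta, ← Complex.exp_nat_mul]
  push_cast
  rw [show (3:ℂ) * (2 * Real.pi * I / 6) = Real.pi * I by ring, Complex.exp_pi_mul_I]

lemma zeta6_pow_two : zeta 6 ^ 2 = zeta 3 := by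
  rw [zeta, zeta, ← Complex.exp_nat_mul]
  push_cast
  congr 1
  ring

lemma zeta3_pow_three : zeta 3 ^ 3 = 1 := by
  have := zeta_pow_self 3 (by norm_num); simpa using this

lemma zeta6_pow_six : zeta 6 ^ 6 = 1 := by
  have := zeta_pow_self 6 (by norm_num); simpa using this

lemma zeta_ne_zero (n : ℕ) : zeta n ≠ 0 := Complex.exp_ne_zero _

end AuxGSM
section MainGSM

open Complex

set_option maxHeartbeats 2000000 in
/-- The homomorphism `(c, g, h) ↦ (c³·g, c⁻²·h)`. -/
noncomputable def φSM : (Circle × SU (Fin 2) × SU (Fin 3)) →*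
    Matrix.unitaryGroup (Fin 2) ℂ × Matrix.unitaryGroup (Fin 3) ℂ where
  toFun x := (uscalar (Fin 2) (x.1 ^ 3) * (x.2.1 : Matrix.unitaryGroup (Fin 2) ℂ),
    uscalar (Fin 3) (x.1⁻¹ ^ 2) * (x.2.2 : Matrix.unitaryGroup (Fin 3) ℂ))
  map_one' := by simp
  map_mul' x y := by
    refine Prod.ext ?_ ?_
    · show uscalar (Fin 2) ((x.1 * y.1) ^ 3) * ((x.2.1 * y.2.1 : SU (Fin 2)) :
        Matrix.unitaryGroup (Fin 2) ℂ) = _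
      rw [mul_pow, map_mul, Subgroup.coe_mul]
      exact Commute.mul_mul_mul_comm (uscalar_comm _ _ _) _ _
    · show uscalar (Fin 3) ((x.1 * y.1)⁻¹ ^ 2) * ((x.2.2 * y.2.2 : SU (Fin 3)) :
        Matrix.unitaryGroup (Fin 3) ℂ) = _
      rw [mul_inv, mul_pow, map_mul, Subgroup.coe_mul]
      exact Commute.mul_mul_mul_comm (uscalar_comm _ _ _) _ _

lemma φSM_mem (x : Circle × SU (Fin 2) × SU (Fin 3)) : φSM x ∈ SU23 := by
  obtain ⟨c, g, h⟩ := x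
  have hg : ((g : Matrix.unitaryGroup (Fin 2) ℂ) : Matrix (Fin 2) (Fin 2) ℂ).det = 1 :=
    (mem_SU_iff _).1 g.2
  have hh : ((h : Matrix.unitaryGroup (Fin 3) ℂ) : Matrix (Fin 3) (Fin 3) ℂ).det = 1 :=
    (mem_SU_iff _).1 h.2
  show (((φSM (c, g, h)).1 : Matrix (Fin 2) (Fin 2) ℂ)).det *
    (((φSM (c, g, h)).2 : Matrix (Fin 3) (Fin 3) ℂ)).det = 1
  show ((uscalar (Fin 2) (c ^ 3) * (g : Matrix.unitaryGroup (Fin 2) ℂ) :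
      Matrix.unitaryGroup (Fin 2) ℂ) : Matrix (Fin 2) (Fin 2) ℂ).det *
    ((uscalar (Fin 3) (c⁻¹ ^ 2) * (h : Matrix.unitaryGroup (Fin 3) ℂ) :
      Matrix.unitaryGroup (Fin 3) ℂ) : Matrix (Fin 3) (Fin 3) ℂ).det = 1
  rw [uscalar_mul_coe, uscalar_mul_coe, Matrix.det_smul, Matrix.det_smul, hg, hh]
  simp only [Fintype.card_fin, mul_one]
  have c1 : ((c ^ 3 : Circle) : ℂ) = (c : ℂ) ^ 3 := map_pow Circle.coeHom c 3
  have c2 : ((c⁻¹ ^ 2 : Circle) : ℂ) = ((c : ℂ))⁻¹ ^ 2 := by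
    rw [show ((c⁻¹ ^ 2 : Circle) : ℂ) = Circle.coeHom (c⁻¹ ^ 2) from rfl, map_pow]
    exact congrArg (· ^ 2) (Circle.coe_inv c)
  rw [c1, c2]
  have hc := Circle.coe_ne_zero c
  field_simp

/-- The corestricted homomorphism into `SU23`. -/
noncomputable def ψSM : (Circle × SU (Fin 2) × SU (Fin 3)) →* SU23 :=
  φSM.codRestrict SU23 φSM_mem

end MainGSM
section RestGSM

open Complex

lemma circle_coe_pow (c : Circle) (k : ℕ) : ((c ^ k : Circle) : ℂ) = (c : ℂ) ^ k :=
  map_pow Circle.coeHom c k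

noncomputable def zc6 : Circle := Circle.exp (2 * Real.pi / 6)
noncomputable def zc3 : Circle := Circle.exp (2 * Real.pi / 3)

lemma zc6_coe : (zc6 : ℂ) = zeta 6 := by
  rw [zc6, Circle.coe_exp, zeta]; congr 1; push_cast; ring

lemma zc3_coe : (zc3 : ℂ) = zeta 3 := by
  rw [zc3, Circle.coe_exp, zeta]; congr 1; push_cast; ring

lemma exp_pi_circle_coe : ((Circle.exp Real.pi : Circle) : ℂ) = -1 := by
  rw [Circle.coe_exp, Complex.exp_pi_mul_I]

/-- The generator `(ζ₆, -1₂, ζ₃·1₃)` as an element of `U(1) × SU(2) × SU(3)`. -/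
noncomputable def zgen : Circle × SU (Fin 2) × SU (Fin 3) :=
  (zc6,
   ⟨uscalar (Fin 2) (Circle.exp Real.pi), by
      rw [mem_SU_iff, uscalar_coe, Matrix.det_smul, Matrix.det_one, exp_pi_circle_coe]
      norm_num⟩,
   ⟨uscalar (Fin 3) zc3, by
      rw [mem_SU_iff, uscalar_coe, Matrix.det_smul, Matrix.det_one, zc3_coe]
      simp [Fintype.card_fin, zeta3_pow_three]⟩)

lemma zgen_matrix2 : ((zgen.2.1 : Matrix.unitaryGroup (Fin 2) ℂ) : Matrix (Fin 2) (Fin 2) ℂ)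
    = -(1 : Matrix (Fin 2) (Fin 2) ℂ) := by
  show ((uscalar (Fin 2) (Circle.exp Real.pi) : Matrix.unitaryGroup (Fin 2) ℂ) :
    Matrix (Fin 2) (Fin 2) ℂ) = _
  rw [uscalar_coe, exp_pi_circle_coe, neg_smul, one_smul]

lemma zgen_matrix3 : ((zgen.2.2 : Matrix.unitaryGroup (Fin 3) ℂ) : Matrix (Fin 3) (Fin 3) ℂ)
    = zeta 3 • (1 : Matrix (Fin 3) (Fin 3) ℂ) := by
  show ((uscalar (Fin 3) zc3 : Matrix.unitaryGroup (Fin 3) ℂ) : Matrix (Fin 3) (Fin 3) ℂ) = _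
  rw [uscalar_coe, zc3_coe]

lemma zgen_mem_N : zgen ∈ N :=
  Subgroup.subset_closure ⟨zc6_coe, zgen_matrix2, zgen_matrix3⟩

end RestGSM

section FinGSM

open Complex

set_option maxHeartbeats 1000000 in
lemma ψSM_surjective : Function.Surjective ψSM := by
  rintro ⟨⟨A, B⟩, hAB⟩
  have hAB' : ((A : Matrix (Fin 2) (Fin 2) ℂ).det) * ((B : Matrix (Fin 3) (Fin 3) ℂ).det) = 1 :=
    hAB
  set d : ℂ := (A : Matrix (Fin 2) (Fin 2) ℂ).det with hd
  have hdu : (starRingEnd ℂ) d * d = 1 :=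
    Unitary.star_mul_self_of_mem (Matrix.det_of_mem_unitary A.2)
  have habs : ‖d‖ = 1 := by
    have h1 : Complex.normSq d = 1 := by
      have := Complex.normSq_eq_conj_mul_self (z := d)
      rw [← this] at hdu
      exact_mod_cast hdu
    rw [Complex.norm_def, h1, Real.sqrt_one]
  set c : Circle := Circle.exp (Complex.arg d / 6) with hc
  have hc6 : (c : ℂ) ^ 6 = d := by
    rw [hc, Circle.coe_exp, ← Complex.exp_nat_mul]
    have : (6 : ℂ) * (((Complex.arg d / 6 : ℝ) : ℂ) * I) = Complex.arg d * I := by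
      push_cast; ring
    rw [show ((6:ℕ):ℂ) = (6:ℂ) by norm_num, this]
    have := Complex.norm_mul_exp_arg_mul_I d
    rwa [habs, Complex.ofReal_one, one_mul] at this
  have hdne : d ≠ 0 := by
    intro h0; rw [h0, mul_zero] at hdu; exact one_ne_zero hdu.symm
  refine ⟨(c, ⟨uscalar (Fin 2) (c⁻¹ ^ 3) * A, ?_⟩, ⟨uscalar (Fin 3) (c ^ 2) * B, ?_⟩), ?_⟩
  · rw [mem_SU_iff, uscalar_mul_coe, Matrix.det_smul, Fintype.card_fin, ← hd]
    have : ((c⁻¹ ^ 3 : Circle) : ℂ) = ((c : ℂ))⁻¹ ^ 3 := by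
      rw [show ((c⁻¹ ^ 3 : Circle) : ℂ) = Circle.coeHom (c⁻¹ ^ 3) from rfl, map_pow]
      exact congrArg (· ^ 3) (Circle.coe_inv c)
    rw [this, ← pow_mul, show 3*2 = 6 from rfl, inv_pow, hc6]
    exact inv_mul_cancel₀ hdne
  · rw [mem_SU_iff, uscalar_mul_coe, Matrix.det_smul, Fintype.card_fin, circle_coe_pow,
      ← pow_mul, show 2*3 = 6 from rfl, hc6]
    exact hAB'
  · apply Subtype.ext
    refine Prod.ext ?_ ?_
    · show uscalar (Fin 2) (c ^ 3) * (uscalar (Fin 2) (c⁻¹ ^ 3) * A) = A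
      rw [← mul_assoc, ← map_mul]
      have : c ^ 3 * c⁻¹ ^ 3 = 1 := by group
      rw [this, map_one, one_mul]
    · show uscalar (Fin 3) (c⁻¹ ^ 2) * (uscalar (Fin 3) (c ^ 2) * B) = B
      rw [← mul_assoc, ← map_mul]
      have : c⁻¹ ^ 2 * c ^ 2 = 1 := by group
      rw [this, map_one, one_mul]

set_option maxHeartbeats 1000000 in
lemma ker_ψSM : MonoidHom.ker ψSM = N := by
  apply le_antisymm
  · -- ker ≤ N
    rintro ⟨c, g, h⟩ hx
    rw [MonoidHom.mem_ker] at hx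
    have h1 : φSM (c, g, h) = 1 := Subtype.ext_iff.1 hx
    have e2 : uscalar (Fin 2) (c ^ 3) * (g : Matrix.unitaryGroup (Fin 2) ℂ) = 1 :=
      congrArg Prod.fst h1
    have e3 : uscalar (Fin 3) (c⁻¹ ^ 2) * (h : Matrix.unitaryGroup (Fin 3) ℂ) = 1 :=
      congrArg Prod.snd h1
    have hg : (g : Matrix.unitaryGroup (Fin 2) ℂ) = uscalar (Fin 2) ((c ^ 3)⁻¹) := by
      rw [map_inv]
      exact (inv_eq_of_mul_eq_one_right e2).symm
    have hh : (h : Matrix.unitaryGroup (Fin 3) ℂ) = uscalar (Fin 3) (c ^ 2) := by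
      have h0 := (inv_eq_of_mul_eq_one_right e3).symm
      rwa [← map_inv, inv_pow, inv_inv] at h0
    -- determinant of g gives c^6 = 1
    have hdetg : ((g : Matrix.unitaryGroup (Fin 2) ℂ) : Matrix (Fin 2) (Fin 2) ℂ).det = 1 :=
      (mem_SU_iff _).1 g.2
    have hc6 : (c : ℂ) ^ 6 = 1 := by
      rw [hg, uscalar_coe, Matrix.det_smul, Matrix.det_one, mul_one, Fintype.card_fin] at hdetg
      have hcoe : (((c ^ 3)⁻¹ : Circle) : ℂ) = ((c : ℂ) ^ 3)⁻¹ := by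
        rw [Circle.coe_inv, circle_coe_pow]
      rw [hcoe, ← inv_pow, ← pow_mul] at hdetg
      norm_num at hdetg
      exact hdetg
    obtain ⟨k, hk6, hkc⟩ :=
      (Complex.isPrimitiveRoot_exp 6 (by norm_num)).eq_pow_of_pow_eq_one hc6
    have hkc' : zeta 6 ^ k = (c : ℂ) := by
      rw [zeta]; exact hkc
    have hxz : (c, g, h) = zgen ^ k := by
      refine Prod.ext ?_ (Prod.ext ?_ ?_)
      · show c = (zgen ^ k).1
        rw [Prod.pow_fst]
        apply Circle.coe_injective
        show (c : ℂ) = ((zc6 ^ k : Circle) : ℂ)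
        rw [circle_coe_pow, zc6_coe, hkc']
      · show g = (zgen ^ k).2.1
        apply Subtype.ext
        apply Subtype.ext
        have hz : ((((zgen ^ k).2.1 : SU (Fin 2)) : Matrix.unitaryGroup (Fin 2) ℂ) :
            Matrix (Fin 2) (Fin 2) ℂ) = (-(1 : Matrix (Fin 2) (Fin 2) ℂ)) ^ k := by
          rw [Prod.pow_snd, Prod.pow_fst, SubmonoidClass.coe_pow, SubmonoidClass.coe_pow,
            zgen_matrix2]
        rw [hz]
        have hcoe : (((c ^ 3)⁻¹ : Circle) : ℂ) = ((-1 : ℂ)) ^ k := by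
          rw [Circle.coe_inv, circle_coe_pow, ← hkc', ← pow_mul, mul_comm k 3, pow_mul,
            zeta6_pow_three, ← inv_pow, inv_neg, inv_one]
        rw [hg, uscalar_coe, hcoe, show (-(1 : Matrix (Fin 2) (Fin 2) ℂ)) = (-1 : ℂ) • 1 by simp,
          smul_pow, one_pow]
      · show h = (zgen ^ k).2.2
        apply Subtype.ext
        apply Subtype.ext
        have hz : ((((zgen ^ k).2.2 : SU (Fin 3)) : Matrix.unitaryGroup (Fin 3) ℂ) :
            Matrix (Fin 3) (Fin 3) ℂ) = (zeta 3 • (1 : Matrix (Fin 3) (Fin 3) ℂ)) ^ k := by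
          rw [Prod.pow_snd, Prod.pow_snd, SubmonoidClass.coe_pow, SubmonoidClass.coe_pow,
            zgen_matrix3]
        rw [hz]
        have hcoe : ((c ^ 2 : Circle) : ℂ) = zeta 3 ^ k := by
          rw [circle_coe_pow, ← hkc', ← pow_mul, mul_comm k 2, pow_mul, zeta6_pow_two]
        rw [hh, uscalar_coe, hcoe, smul_pow, one_pow]
    rw [hxz]
    exact pow_mem zgen_mem_N k
  · -- N ≤ ker
    rw [N, Subgroup.closure_le]
    rintro ⟨c, g, h⟩ ⟨hc, hA, hB⟩
    rw [SetLike.mem_coe, MonoidHom.mem_ker]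
    apply Subtype.ext
    show φSM (c, g, h) = 1
    refine Prod.ext ?_ ?_
    · apply Subtype.ext
      show ((uscalar (Fin 2) (c ^ 3) * (g : Matrix.unitaryGroup (Fin 2) ℂ) :
          Matrix.unitaryGroup (Fin 2) ℂ) : Matrix (Fin 2) (Fin 2) ℂ) = 1
      rw [uscalar_mul_coe, hA, circle_coe_pow, hc, zeta6_pow_three]
      simp
    · apply Subtype.ext
      show ((uscalar (Fin 3) (c⁻¹ ^ 2) * (h : Matrix.unitaryGroup (Fin 3) ℂ) :
          Matrix.unitaryGroup (Fin 3) ℂ) : Matrix (Fin 3) (Fin 3) ℂ) = 1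
      have hcoe : ((c⁻¹ ^ 2 : Circle) : ℂ) = ((c : ℂ) ^ 2)⁻¹ := by
        rw [show ((c⁻¹ ^ 2 : Circle) : ℂ) = Circle.coeHom (c⁻¹ ^ 2) from rfl, map_pow]
        exact (congrArg (· ^ 2) (Circle.coe_inv c)).trans (inv_pow _ _)
      rw [uscalar_mul_coe, hB, hcoe, hc, zeta6_pow_two, smul_smul,
        inv_mul_cancel₀ (zeta_ne_zero 3), one_smul]

end FinGSM

/-- **Additive realization of the minimal Standard Model group (Section 5.1).**
The quotient of `U(1) × SU(2) × SU(3)` by the cyclic subgroup generated by the central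
element `(ζ₂⁻¹·ζ₃⁻¹, ζ₂·1₂, ζ₃·1₃) = (ζ₆, -1₂, ζ₃·1₃)` is isomorphic, as a group, to
`S(U(2)×U(3)) = {(A, B) ∈ U(2)×U(3) : det A · det B = 1}`. -/
theorem GSM_iso_SU23 :
    Nonempty (((Circle × SU (Fin 2) × SU (Fin 3)) ⧸ N) ≃* SU23) :=
  ⟨(QuotientGroup.quotientMulEquivOfEq ker_ψSM.symm).trans
    (QuotientGroup.quotientKerEquivOfSurjective ψSM ψSM_surjective)⟩
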